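/- arXiv:1004.3791 — 2 statements merged into one kernel-verified Lean document; each statement's English description precedes it below -/
import Mathlib

section
/- Under the Kitaev mapping of an [[n,k,d]] stabilizer code to a Majorana code on 4n modes, a Majorana operator commuting with all generators D_j = b_j^x b_j^y b_j^z c_j must act on an even number of the four modes {b_j^x, b_j^y, b_j^z, c_j} for each j; consequently every logical operator of the Majorana code corresponds (modulo the D_j) to a Pauli operator on the n qubits, and since each nontrivial single-qubit Pauli maps to a weight-2 Majorana operator, the distance of the Majorana code is exactly 2d. -/
/-- Hamming weight of a binary vector. -/
def wt {ι : Type*} [Fintype ι] (x : ι → ZMod 2) : ℕ :=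
  (Finset.univ.filter fun i => x i ≠ 0).card

/-- Support of a binary vector. -/
def supp {ι : Type*} [Fintype ι] (x : ι → ZMod 2) : Finset ι :=
  Finset.univ.filter fun i => x i ≠ 0

/-- The `F₂` inner product. -/
def dot {ι : Type*} [Fintype ι] (x y : ι → ZMod 2) : ZMod 2 := ∑ i, x i * y i

/-- The dual code `C^⊥` of a linear code `C ⊆ F₂^ι`. -/
def dualCode {ι : Type*} [Fintype ι] (C : Submodule (ZMod 2) (ι → ZMod 2)) :
    Submodule (ZMod 2) (ι → ZMod 2) where
  carrier := {y | ∀ x ∈ C, dot x y = 0}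
  add_mem' := by
    intro a b ha hb x hx
    have h : dot x (a + b) = dot x a + dot x b := by
      simp [dot, mul_add, Finset.sum_add_distrib]
    simp only [Set.mem_setOf_eq] at *
    rw [h, ha x hx, hb x hx, add_zero]
  zero_mem' := by intro x _; simp [dot]
  smul_mem' := by
    intro c a ha x hx
    have h : dot x (c • a) = c * dot x a := by
      simp only [dot, Pi.smul_apply, smul_eq_mul, Finset.mul_sum]
      exact Finset.sum_congr rfl fun i _ => by ring
    simp only [Set.mem_setOf_eq] at *
    rw [h, ha x hx, mul_zero]

/-- The symplectic form on `F₂^{2n}` encoding commutation of Pauli operators: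
a Pauli operator is encoded as a pair `(x, z)` of its X- and Z-vectors. -/
def symp {n : ℕ} (p q : (Fin n → ZMod 2) × (Fin n → ZMod 2)) : ZMod 2 :=
  ∑ j, (p.1 j * q.2 j + p.2 j * q.1 j)

/-- The symplectic dual (the set of Pauli vectors commuting with every element of `S`). -/
def sympDual {n : ℕ}
    (S : Submodule (ZMod 2) ((Fin n → ZMod 2) × (Fin n → ZMod 2))) :
    Submodule (ZMod 2) ((Fin n → ZMod 2) × (Fin n → ZMod 2)) where
  carrier := {p | ∀ q ∈ S, symp q p = 0}
  add_mem' := by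
    intro a b ha hb q hq
    have h : symp q (a + b) = symp q a + symp q b := by
      simp only [symp, Prod.fst_add, Prod.snd_add, Pi.add_apply, mul_add,
        ← Finset.sum_add_distrib]
      exact Finset.sum_congr rfl fun i _ => by ring
    simp only [Set.mem_setOf_eq] at *
    rw [h, ha q hq, hb q hq, add_zero]
  zero_mem' := by intro q _; simp [symp]
  smul_mem' := by
    intro t a ha q hq
    have h : symp q (t • a) = t * symp q a := by
      simp only [symp, Prod.smul_fst, Prod.smul_snd, Pi.smul_apply, smul_eq_mul,
        Finset.mul_sum]
      exact Finset.sum_congr rfl fun i _ => by ring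
    simp only [Set.mem_setOf_eq] at *
    rw [h, ha q hq, mul_zero]

/-- Kitaev's mapping: each qubit `j` is replaced by four Majorana modes
`b_j^x, b_j^y, b_j^z, c_j` (coordinates `0,1,2,3` of the block `j`); modulo the block
parity operators `D_j`, the Pauli `X_j` maps to `b_j^x c_j`, `Z_j` to `b_j^z c_j`, and
`Y_j` to `b_j^y c_j`.  In the `F₂` picture this is the linear map below. -/
def kitaevMap {n : ℕ} (p : (Fin n → ZMod 2) × (Fin n → ZMod 2)) :
    Fin n × Fin 4 → ZMod 2 :=
  fun q =>
    if q.2 = 0 then p.1 q.1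
    else if q.2 = 2 then p.2 q.1
    else if q.2 = 3 then p.1 q.1 + p.2 q.1
    else 0

/-- The support vector of the block parity operator `D_j = b_j^x b_j^y b_j^z c_j`. -/
def Dvec {n : ℕ} (j : Fin n) : Fin n × Fin 4 → ZMod 2 :=
  fun q => if q.1 = j then 1 else 0

/-- The Majorana fermion code (in the `F₂` support picture) obtained from a qubit
stabilizer code `S` by Kitaev's mapping, with the extra generators `D_j`. -/
def kitaevCode {n : ℕ}
    (S : Submodule (ZMod 2) ((Fin n → ZMod 2) × (Fin n → ZMod 2))) :
    Submodule (ZMod 2) (Fin n × Fin 4 → ZMod 2) :=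
  Submodule.span (ZMod 2) (kitaevMap '' (S : Set _) ∪ Set.range Dvec)

section Stmt10Aux

open Finset

variable {n : ℕ}

lemma dot_add_left {ι : Type*} [Fintype ι] (x y v : ι → ZMod 2) :
    dot (x + y) v = dot x v + dot y v := by
  simp [dot, add_mul, Finset.sum_add_distrib]

lemma dot_smul_left {ι : Type*} [Fintype ι] (c : ZMod 2) (x v : ι → ZMod 2) :
    dot (c • x) v = c * dot x v := by
  simp [dot, Finset.mul_sum, mul_assoc]

lemma dot_add_right {ι : Type*} [Fintype ι] (x v w : ι → ZMod 2) :
    dot x (v + w) = dot x v + dot x w := by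
  simp [dot, mul_add, Finset.sum_add_distrib]

lemma mem_dual_span {ι : Type*} [Fintype ι] (T : Set (ι → ZMod 2)) (v : ι → ZMod 2) :
    v ∈ dualCode (Submodule.span (ZMod 2) T) ↔ ∀ x ∈ T, dot x v = 0 := by
  constructor
  · intro h x hx
    exact h x (Submodule.subset_span hx)
  · intro h x hx
    induction hx using Submodule.span_induction with
    | mem y hy => exact h y hy
    | zero => simp [dot]
    | add y z _ _ hy hz => rw [dot_add_left, hy, hz, add_zero]
    | smul c y _ hy => rw [dot_smul_left, hy, mul_zero]

/-- The Pauli vector extracted from an even-block Majorana vector. -/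
def Pv (v : Fin n × Fin 4 → ZMod 2) : (Fin n → ZMod 2) × (Fin n → ZMod 2) :=
  (fun j => v (j, 0) + v (j, 1), fun j => v (j, 2) + v (j, 1))

lemma kitaevMap_add (p q : (Fin n → ZMod 2) × (Fin n → ZMod 2)) :
    kitaevMap (p + q) = kitaevMap p + kitaevMap q := by
  funext x
  simp only [kitaevMap, Prod.fst_add, Prod.snd_add, Pi.add_apply]
  split_ifs <;> first | ring | simp

lemma kitaevMap_smul (c : ZMod 2) (p : (Fin n → ZMod 2) × (Fin n → ZMod 2)) :
    kitaevMap (c • p) = c • kitaevMap p := by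
  funext x
  simp only [kitaevMap, Prod.smul_fst, Prod.smul_snd, Pi.smul_apply, smul_eq_mul]
  split_ifs <;> first | ring | simp

/-- Kitaev's map as a linear map. -/
def klin : ((Fin n → ZMod 2) × (Fin n → ZMod 2)) →ₗ[ZMod 2] (Fin n × Fin 4 → ZMod 2) where
  toFun := kitaevMap
  map_add' := kitaevMap_add
  map_smul' := kitaevMap_smul

/-- The block pattern of a Pauli pair `(a, b)` under Kitaev's map. -/
def blockFun (a b : ZMod 2) : Fin 4 → ZMod 2 :=
  fun i => if i = 0 then a else if i = 2 then b else if i = 3 then a + b else 0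

lemma kitaevMap_apply (p : (Fin n → ZMod 2) × (Fin n → ZMod 2)) (j : Fin n) (i : Fin 4) :
    kitaevMap p (j, i) = blockFun (p.1 j) (p.2 j) i := rfl

lemma decomp (v : Fin n × Fin 4 → ZMod 2)
    (hev : ∀ j : Fin n, ∑ a : Fin 4, v (j, a) = 0) :
    v = kitaevMap (Pv v) + fun q : Fin n × Fin 4 => v (q.1, 1) := by
  have key : ∀ w : Fin 4 → ZMod 2, w 0 + w 1 + w 2 + w 3 = 0 → ∀ i : Fin 4,
      w i = blockFun (w 0 + w 1) (w 2 + w 1) i + w 1 := by decide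
  funext q
  obtain ⟨j, a⟩ := q
  have h := hev j
  rw [Fin.sum_univ_four] at h
  exact key (fun i => v (j, i)) h a

lemma Dpart_mem_code (S : Submodule (ZMod 2) ((Fin n → ZMod 2) × (Fin n → ZMod 2)))
    (v : Fin n × Fin 4 → ZMod 2) :
    (fun q : Fin n × Fin 4 => v (q.1, 1)) ∈ kitaevCode S := by
  have heq : (fun q : Fin n × Fin 4 => v (q.1, 1)) = ∑ j : Fin n, v (j, 1) • Dvec j := by
    funext q
    simp [Dvec, Finset.sum_apply, mul_ite, Finset.sum_ite_eq]
  rw [heq]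
  exact Submodule.sum_mem _ fun j _ => Submodule.smul_mem _ _
    (Submodule.subset_span (Or.inr ⟨j, rfl⟩))

lemma dot_Dvec (j : Fin n) (v : Fin n × Fin 4 → ZMod 2) :
    dot (Dvec j) v = ∑ a : Fin 4, v (j, a) := by
  rw [dot, Fintype.sum_prod_type]
  rw [Finset.sum_eq_single j]
  · simp [Dvec]
  · intro b _ hb; simp [Dvec, hb]
  · intro h; exact absurd (Finset.mem_univ j) h

lemma sum_block_kitaev (p : (Fin n → ZMod 2) × (Fin n → ZMod 2)) (j : Fin n) :
    ∑ a : Fin 4, kitaevMap p (j, a) = 0 := by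
  have key : ∀ a b : ZMod 2, a + 0 + b + (a + b) = 0 := by decide
  rw [Fin.sum_univ_four]
  simp only [kitaevMap]
  norm_num
  exact key (p.1 j) (p.2 j)

lemma dot_kitaev_kitaev (s p : (Fin n → ZMod 2) × (Fin n → ZMod 2)) :
    dot (kitaevMap s) (kitaevMap p) = symp s p := by
  rw [dot, Fintype.sum_prod_type, symp]
  refine Finset.sum_congr rfl fun j _ => ?_
  have key : ∀ a₁ a₂ b₁ b₂ : ZMod 2,
      a₁ * b₁ + 0 * 0 + a₂ * b₂ + (a₁ + a₂) * (b₁ + b₂) = a₁ * b₂ + a₂ * b₁ := by decide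
  rw [Fin.sum_univ_four]
  simp only [kitaevMap]
  norm_num
  exact key (s.1 j) (s.2 j) (p.1 j) (p.2 j)

lemma dot_kitaev_const (s : (Fin n → ZMod 2) × (Fin n → ZMod 2))
    (v : Fin n × Fin 4 → ZMod 2) :
    dot (kitaevMap s) (fun q : Fin n × Fin 4 => v (q.1, 1)) = 0 := by
  rw [dot, Fintype.sum_prod_type]
  refine Finset.sum_eq_zero fun j _ => ?_
  have : ∑ a : Fin 4, kitaevMap s (j, a) * v (j, 1)
      = (∑ a : Fin 4, kitaevMap s (j, a)) * v (j, 1) := by rw [Finset.sum_mul]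
  rw [this, sum_block_kitaev, zero_mul]

lemma const_of_mem_spanD {z : Fin n × Fin 4 → ZMod 2}
    (hz : z ∈ Submodule.span (ZMod 2) (Set.range (Dvec (n := n)))) :
    ∀ (j : Fin n) (a : Fin 4), z (j, a) = z (j, 0) := by
  induction hz using Submodule.span_induction with
  | mem y hy => obtain ⟨j', rfl⟩ := hy; intro j a; simp [Dvec]
  | zero => intro j a; simp
  | add y z _ _ hy hz => intro j a; simp only [Pi.add_apply, hy j a, hz j a]
  | smul c y _ hy => intro j a; simp only [Pi.smul_apply, hy j a]

lemma kitaevMap_inj {p q : (Fin n → ZMod 2) × (Fin n → ZMod 2)}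
    (h : kitaevMap p = kitaevMap q) : p = q := by
  have h1 : p.1 = q.1 := funext fun j => by
    have := congrFun h (j, 0); simpa [kitaevMap] using this
  have h2 : p.2 = q.2 := funext fun j => by
    have := congrFun h (j, 2); simpa [kitaevMap] using this
  exact Prod.ext h1 h2

lemma kitaevCode_eq (S : Submodule (ZMod 2) ((Fin n → ZMod 2) × (Fin n → ZMod 2))) :
    kitaevCode S = Submodule.map klin S ⊔ Submodule.span (ZMod 2) (Set.range Dvec) := by
  rw [kitaevCode, Submodule.span_union]
  congr 1
  rw [show kitaevMap '' (S : Set _) = ⇑(klin (n := n)) '' (S : Set _) from rfl,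
    Submodule.span_image, Submodule.span_eq]

lemma kitaev_mem_code_iff (S : Submodule (ZMod 2) ((Fin n → ZMod 2) × (Fin n → ZMod 2)))
    (p : (Fin n → ZMod 2) × (Fin n → ZMod 2)) :
    kitaevMap p ∈ kitaevCode S ↔ p ∈ S := by
  constructor
  · intro h
    rw [kitaevCode_eq, Submodule.mem_sup] at h
    obtain ⟨y, hy, z, hz, hyz⟩ := h
    obtain ⟨s, hs, rfl⟩ := hy
    have hconst := const_of_mem_spanD hz
    have hz1 : ∀ j : Fin n, z (j, 0) = 0 := by
      intro j
      have h1 := congrFun hyz (j, 1)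
      rw [← hconst j 1]
      have e1 : klin (n := n) s (j, 1) = 0 := by simp [klin, kitaevMap]
      have e2 : kitaevMap p (j, 1) = 0 := by simp [kitaevMap]
      rw [Pi.add_apply, e1, e2, zero_add] at h1
      exact h1
    have hz0 : z = 0 := by
      funext q
      rw [show q = (q.1, q.2) from rfl, hconst q.1 q.2, hz1, Pi.zero_apply]
    rw [hz0, add_zero] at hyz
    have : kitaevMap s = kitaevMap p := hyz
    rw [← kitaevMap_inj this]
    exact hs
  · intro h
    exact Submodule.subset_span (Or.inl ⟨p, h, rfl⟩)

lemma blockcard_kitaev : ∀ a b : ZMod 2,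
    (Finset.univ.filter fun i : Fin 4 => blockFun a b i ≠ 0).card
      = if a = 0 ∧ b = 0 then 0 else 2 := by decide

lemma blockcard_ge : ∀ a b e : ZMod 2,
    (if a = 0 ∧ b = 0 then 0 else 2)
      ≤ (Finset.univ.filter fun i : Fin 4 => blockFun a b i + e ≠ 0).card := by decide

lemma wt_eq_sum_block (v : Fin n × Fin 4 → ZMod 2) :
    wt v = ∑ j : Fin n, (Finset.univ.filter fun a : Fin 4 => v (j, a) ≠ 0).card := by
  rw [wt, Finset.card_filter, Fintype.sum_prod_type]
  exact Finset.sum_congr rfl fun j _ => (Finset.card_filter _ _).symm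

lemma pauli_card (p : (Fin n → ZMod 2) × (Fin n → ZMod 2)) :
    (supp p.1 ∪ supp p.2).card
      = (Finset.univ.filter fun j => ¬(p.1 j = 0 ∧ p.2 j = 0)).card := by
  rw [supp, supp, ← Finset.filter_or]
  congr 1
  apply Finset.filter_congr
  intro j _
  tauto

lemma sum_ite_two (A : Fin n → Prop) [DecidablePred A] :
    ∑ j : Fin n, (if A j then 0 else 2)
      = 2 * (Finset.univ.filter fun j => ¬ A j).card := by
  rw [Finset.card_filter, Finset.mul_sum]
  exact Finset.sum_congr rfl fun j _ => by by_cases h : A j <;> simp [h]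

lemma wt_kitaev (p : (Fin n → ZMod 2) × (Fin n → ZMod 2)) :
    wt (kitaevMap p) = 2 * (supp p.1 ∪ supp p.2).card := by
  rw [wt_eq_sum_block, pauli_card, ← sum_ite_two]
  refine Finset.sum_congr rfl fun j _ => ?_
  rw [← blockcard_kitaev (p.1 j) (p.2 j)]
  exact congrArg Finset.card
    (Finset.filter_congr fun i _ => by rw [kitaevMap_apply])

lemma wt_ge (v : Fin n × Fin 4 → ZMod 2)
    (hev : ∀ j : Fin n, ∑ a : Fin 4, v (j, a) = 0) :
    2 * (supp (Pv v).1 ∪ supp (Pv v).2).card ≤ wt v := by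
  have hdec := decomp v hev
  rw [wt_eq_sum_block, pauli_card, ← sum_ite_two]
  refine Finset.sum_le_sum fun j _ => ?_
  have hblock : ∀ i : Fin 4, v (j, i) = blockFun ((Pv v).1 j) ((Pv v).2 j) i + v (j, 1) := by
    intro i
    conv_lhs => rw [hdec]
    rfl
  calc (if (Pv v).1 j = 0 ∧ (Pv v).2 j = 0 then 0 else 2)
      ≤ (Finset.univ.filter fun i : Fin 4 =>
          blockFun ((Pv v).1 j) ((Pv v).2 j) i + v (j, 1) ≠ 0).card :=
        blockcard_ge _ _ _
    _ = (Finset.univ.filter fun a : Fin 4 => v (j, a) ≠ 0).card :=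
        congrArg Finset.card (Finset.filter_congr fun i _ => by rw [hblock i])

lemma mem_dual_iff (S : Submodule (ZMod 2) ((Fin n → ZMod 2) × (Fin n → ZMod 2)))
    (v : Fin n × Fin 4 → ZMod 2) :
    v ∈ dualCode (kitaevCode S) ↔
      (∀ s ∈ S, dot (kitaevMap s) v = 0) ∧ ∀ j : Fin n, dot (Dvec j) v = 0 := by
  rw [kitaevCode, mem_dual_span]
  constructor
  · intro h
    exact ⟨fun s hs => h _ (Or.inl ⟨s, hs, rfl⟩), fun j => h _ (Or.inr ⟨j, rfl⟩)⟩
  · rintro ⟨h1, h2⟩ x (⟨s, hs, rfl⟩ | ⟨j, rfl⟩)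
    exacts [h1 s hs, h2 j]

lemma even_card_of_sum_zero (w : Fin 4 → ZMod 2) (h : ∑ a, w a = 0) :
    Even (Finset.univ.filter fun a => w a ≠ 0).card := by
  have hcast : ((Finset.univ.filter fun a => w a ≠ 0).card : ZMod 2) = 0 := by
    have step : ((Finset.univ.filter fun a => w a ≠ 0).card : ZMod 2) = ∑ a, w a := by
      rw [Finset.card_filter]
      push_cast
      refine Finset.sum_congr rfl fun a _ => ?_
      have hx : ∀ x : ZMod 2, (if x ≠ 0 then (1 : ZMod 2) else 0) = x := by decide
      exact hx (w a)
    rw [step, h]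
  have := (ZMod.natCast_eq_zero_iff _ 2).mp hcast
  obtain ⟨m, hm⟩ := this
  exact ⟨m, by omega⟩

end Stmt10Aux

/-- under the Kitaev mapping of an `[[n,k,d]]` stabilizer code to a Majorana
code on `4n` modes, any Majorana operator commuting with all block generators `D_j`
(i.e. any element of the centralizer) has even support in each block of four modes
`{b_j^x, b_j^y, b_j^z, c_j}`; and the distance of the Majorana code (minimum weight of a
centralizer element not in the code) is exactly `2d`, where `d` is the distance of the
original stabilizer code (minimum Pauli weight `|supp x ∪ supp z|` over the symplectic
centralizer minus the stabilizer). -/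
theorem stmt_10 {n k d : ℕ} (hk : k ≤ n)
    (S : Submodule (ZMod 2) ((Fin n → ZMod 2) × (Fin n → ZMod 2)))
    (hiso : ∀ p ∈ S, ∀ q ∈ S, symp p q = 0)
    (hdim : Module.finrank (ZMod 2) S = n - k)
    (hd : d = sInf {m : ℕ | ∃ p, p ∈ sympDual S ∧ p ∉ S ∧ m = (supp p.1 ∪ supp p.2).card}) :
    (∀ v ∈ dualCode (kitaevCode S), ∀ j : Fin n,
        Even ((Finset.univ.filter fun a : Fin 4 => v (j, a) ≠ 0).card)) ∧
    sInf {m : ℕ | ∃ v, v ∈ dualCode (kitaevCode S) ∧ v ∉ kitaevCode S ∧ m = wt v}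
      = 2 * d := by
  have part1 : ∀ v ∈ dualCode (kitaevCode S), ∀ j : Fin n,
      ∑ a : Fin 4, v (j, a) = 0 := by
    intro v hv j
    have h := ((mem_dual_iff S v).mp hv).2 j
    rwa [dot_Dvec] at h
  refine ⟨fun v hv j => even_card_of_sum_zero _ (part1 v hv j), ?_⟩
  have claimA : ∀ v ∈ dualCode (kitaevCode S), v ∉ kitaevCode S →
      Pv v ∈ sympDual S ∧ Pv v ∉ S ∧
        2 * (supp (Pv v).1 ∪ supp (Pv v).2).card ≤ wt v := by
    intro v hv hvc
    have hev := part1 v hv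
    have hdec := decomp v hev
    refine ⟨?_, ?_, wt_ge v hev⟩
    · intro q hq
      have h := ((mem_dual_iff S v).mp hv).1 q hq
      rw [hdec, dot_add_right, dot_kitaev_kitaev, dot_kitaev_const, add_zero] at h
      exact h
    · intro hPS
      apply hvc
      rw [hdec]
      exact Submodule.add_mem _ ((kitaev_mem_code_iff S _).mpr hPS) (Dpart_mem_code S v)
  have claimB : ∀ p, p ∈ sympDual S → p ∉ S →
      kitaevMap p ∈ dualCode (kitaevCode S) ∧ kitaevMap p ∉ kitaevCode S := by
    intro p hp hps
    refine ⟨(mem_dual_iff S _).mpr ⟨fun s hs => ?_, fun j => ?_⟩,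
      fun h => hps ((kitaev_mem_code_iff S p).mp h)⟩
    · rw [dot_kitaev_kitaev]; exact hp s hs
    · rw [dot_Dvec]; exact sum_block_kitaev p j
  set Pset := {m : ℕ | ∃ p, p ∈ sympDual S ∧ p ∉ S ∧ m = (supp p.1 ∪ supp p.2).card}
    with hPset
  set Mset := {m : ℕ | ∃ v, v ∈ dualCode (kitaevCode S) ∧ v ∉ kitaevCode S ∧ m = wt v}
    with hMset
  by_cases hne : Pset.Nonempty
  · obtain ⟨p, hp1, hp2, hp3⟩ := Nat.sInf_mem hne
    have hmem : 2 * d ∈ Mset := by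
      refine ⟨kitaevMap p, (claimB p hp1 hp2).1, (claimB p hp1 hp2).2, ?_⟩
      rw [wt_kitaev, ← hp3, ← hd]
    have hMne : Mset.Nonempty := ⟨_, hmem⟩
    have hle : sInf Mset ≤ 2 * d := Nat.sInf_le hmem
    obtain ⟨v, hv1, hv2, hv3⟩ := Nat.sInf_mem hMne
    obtain ⟨hq1, hq2, hq3⟩ := claimA v hv1 hv2
    have hPm : (supp (Pv v).1 ∪ supp (Pv v).2).card ∈ Pset := ⟨Pv v, hq1, hq2, rfl⟩
    have hge : 2 * d ≤ sInf Mset := by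
      rw [hv3]
      calc 2 * d ≤ 2 * (supp (Pv v).1 ∪ supp (Pv v).2).card := by
            rw [hd]; exact Nat.mul_le_mul_left 2 (Nat.sInf_le hPm)
        _ ≤ wt v := hq3
    omega
  · rw [Set.not_nonempty_iff_eq_empty] at hne
    have hMe : Mset = ∅ := by
      ext m
      simp only [Set.mem_empty_iff_false, iff_false]
      rintro ⟨v, hv1, hv2, rfl⟩
      obtain ⟨hq1, hq2, _⟩ := claimA v hv1 hv2
      have hPm : (supp (Pv v).1 ∪ supp (Pv v).2).card ∈ Pset := ⟨Pv v, hq1, hq2, rfl⟩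
      rw [hne] at hPm
      exact hPm
    have hd0 : d = 0 := by rw [hd, hne, Nat.sInf_empty]
    rw [hMe, hd0, Nat.sInf_empty]
end

section
/- Let C ⊆ F_2^N be weakly self-dual and M ⊆ {1,...,N}, with C(M) the subcode supported on M and C^M the restriction of C to M (both viewed in F_2^M). If C(M) = (C^M)^⊥ (equivalently C^M = C(M)^⊥), then M is 'cleanable': for every v ∈ C^⊥ there exists y ∈ C such that (v + y)|_M = 0. Conversely, if the inclusion C(M) ⊆ (C^M)^⊥ is strict, then there exists a vector in C^⊥ \ C supported on M (a logical operator on M). -/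
/-- Restriction of a vector to a subset `M` of coordinates (extended by zero). -/
def restrict {ι : Type*} [Fintype ι] [DecidableEq ι] (M : Finset ι)
    (y : ι → ZMod 2) : ι → ZMod 2 :=
  fun i => if i ∈ M then y i else 0

/-- `C(M)`: the subcode of codewords of `C` supported inside `M` (viewed in `F₂^M`). -/
def subCode {ι : Type*} [Fintype ι] (C : Submodule (ZMod 2) (ι → ZMod 2))
    (M : Finset ι) : Set (ι → ZMod 2) :=
  {x | x ∈ C ∧ ∀ i ∉ M, x i = 0}

/-- `C^M`: the restriction (puncturing) of `C` to `M`, i.e. the vectors supported on `M`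
that equal the restriction to `M` of some codeword of `C`. -/
def restCode {ι : Type*} [Fintype ι] [DecidableEq ι]
    (C : Submodule (ZMod 2) (ι → ZMod 2)) (M : Finset ι) : Set (ι → ZMod 2) :=
  {z | ∃ y ∈ C, z = restrict M y}

/-- The dot product as a bilinear form. -/
noncomputable def dotForm {ι : Type*} [Fintype ι] :
    LinearMap.BilinForm (ZMod 2) (ι → ZMod 2) :=
  LinearMap.mk₂ (ZMod 2) (fun x y => dot x y)
    (by intro x x' y; simp [dot, add_mul, Finset.sum_add_distrib])
    (by intro c x y; simp [dot, Finset.mul_sum, mul_assoc])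
    (by intro x y y'; simp [dot, mul_add, Finset.sum_add_distrib])
    (by intro c x y; simp [dot, Finset.mul_sum]; apply Finset.sum_congr rfl; intros; ring)

lemma dotForm_apply {ι : Type*} [Fintype ι] (x y : ι → ZMod 2) :
    dotForm x y = dot x y := rfl

lemma dot_comm {ι : Type*} [Fintype ι] (x y : ι → ZMod 2) : dot x y = dot y x := by
  simp [dot, mul_comm]

lemma dotForm_nondegenerate {ι : Type*} [Fintype ι] [DecidableEq ι] :
    (dotForm (ι := ι)).Nondegenerate := by
  constructor <;> intro x hx <;>
  funext i <;>
  have := hx (Pi.single i 1) <;>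
  simpa [dotForm_apply, dot, Pi.single_apply, Finset.sum_ite_eq', mul_comm] using this

lemma dotForm_isRefl {ι : Type*} [Fintype ι] : (dotForm (ι := ι)).IsRefl := by
  intro x y h
  rwa [dotForm_apply, dot_comm, ← dotForm_apply]

lemma dot_restrict {ι : Type*} [Fintype ι] [DecidableEq ι] (M : Finset ι)
    (x y : ι → ZMod 2) (hx : ∀ i ∉ M, x i = 0) : dot x (restrict M y) = dot x y := by
  apply Finset.sum_congr rfl
  intro i _
  by_cases h : i ∈ M
  · simp [restrict, h]
  · simp [restrict, h, hx i h]

/-- `C^M` as a submodule. -/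
def restCodeSub {ι : Type*} [Fintype ι] [DecidableEq ι]
    (C : Submodule (ZMod 2) (ι → ZMod 2)) (M : Finset ι) :
    Submodule (ZMod 2) (ι → ZMod 2) where
  carrier := restCode C M
  add_mem' := by
    rintro a b ⟨y, hy, rfl⟩ ⟨y', hy', rfl⟩
    exact ⟨y + y', C.add_mem hy hy', by funext i; simp [restrict]; split <;> simp⟩
  zero_mem' := ⟨0, C.zero_mem, by funext i; simp [restrict]⟩
  smul_mem' := by
    rintro c a ⟨y, hy, rfl⟩
    exact ⟨c • y, C.smul_mem c hy, by funext i; simp only [restrict, Pi.smul_apply]; split <;> simp⟩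

/-- let `C ⊆ F₂^N` be weakly self-dual and `M` a subset of coordinates.
(i) If `C(M) = (C^M)^⊥` (orthogonal complement taken among vectors supported on `M`),
then `M` is cleanable: every `v ∈ C^⊥` can be modified by some `y ∈ C` so that `v + y`
vanishes on `M`.  (ii) Conversely, if the inclusion `C(M) ⊆ (C^M)^⊥` is strict, then there
is a vector of `C^⊥ \ C` supported on `M` (a logical operator on `M`). -/

theorem stmt_18 {N : ℕ} (C : Submodule (ZMod 2) (Fin N → ZMod 2))
    (hsd : C ≤ dualCode C) (M : Finset (Fin N)) :
    ((subCode C M = {x | (∀ i ∉ M, x i = 0) ∧ ∀ z ∈ restCode C M, dot x z = 0} →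
        ∀ v ∈ dualCode C, ∃ y ∈ C, restrict M (v + y) = 0) ∧
     ((∃ x : Fin N → ZMod 2, (∀ i ∉ M, x i = 0) ∧ (∀ z ∈ restCode C M, dot x z = 0) ∧
          x ∉ subCode C M) →
        ∃ w, w ∈ dualCode C ∧ w ∉ C ∧ ∀ i ∉ M, w i = 0)) := by
  constructor
  · intro hC v hv
    have key : restrict M v ∈ restCodeSub C M := by
      rw [← LinearMap.BilinForm.orthogonal_orthogonal
        (dotForm_nondegenerate (ι := Fin N)) dotForm_isRefl (restCodeSub C M)]
      rw [LinearMap.BilinForm.mem_orthogonal_iff]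
      intro u hu
      rw [LinearMap.BilinForm.mem_orthogonal_iff] at hu
      set u' := restrict M u with hu'
      have hu'M : ∀ i ∉ M, u' i = 0 := by intro i hi; simp [hu', restrict, hi]
      have hu'orth : ∀ z ∈ restCode C M, dot u' z = 0 := by
        rintro z ⟨y, hy, rfl⟩
        have hz : restrict M y ∈ restCodeSub C M := ⟨y, hy, rfl⟩
        have := hu _ hz
        rw [dotForm_apply, dot_comm] at this
        have hM : ∀ i ∉ M, restrict M y i = 0 := by intro i hi; simp [restrict, hi]
        calc dot u' (restrict M y) = dot (restrict M y) u' := dot_comm _ _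
          _ = dot (restrict M y) u := dot_restrict M _ u hM
          _ = 0 := by rw [dot_comm]; exact this
      have hu'sub : u' ∈ subCode C M := by rw [hC]; exact ⟨hu'M, hu'orth⟩
      have hu'C : u' ∈ C := hu'sub.1
      have h0 : dot u' v = 0 := hv u' hu'C
      rw [dotForm_apply]
      have hMv : ∀ i ∉ M, restrict M v i = 0 := by intro i hi; simp [restrict, hi]
      calc dot u (restrict M v) = dot (restrict M v) u := dot_comm _ _
        _ = dot (restrict M v) u' := (dot_restrict M _ u hMv).symm
        _ = dot u' (restrict M v) := dot_comm _ _
        _ = dot u' v := dot_restrict M u' v hu'M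
        _ = 0 := h0
    obtain ⟨y, hy, hyv⟩ := key
    refine ⟨y, hy, ?_⟩
    funext i
    have := congrFun hyv i
    simp only [restrict] at this ⊢
    split
    · next h =>
        rw [Pi.add_apply, show v i = y i by simpa [h] using this]
        show y i + y i = 0
        exact CharTwo.add_self_eq_zero _
    · rfl
  · rintro ⟨x, hxM, hxorth, hxsub⟩
    refine ⟨x, ?_, ?_, hxM⟩
    · intro y hy
      have : dot x (restrict M y) = 0 := hxorth _ ⟨y, hy, rfl⟩
      rw [dot_restrict M x y hxM] at this
      rw [dot_comm]; exact this
    · intro hxC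
      exact hxsub ⟨hxC, hxM⟩
end
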